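/- Let G=(V,E) be a finite graph with coupling constants J:E→[0,∞) and let g̃:V→[0,∞) be a nonnegative external field. Then for any u,v∈V, the map λ ↦ ⟨σ_uσ_v⟩_{λg̃} − ⟨σ_u⟩_{λg̃}⟨σ_v⟩_{λg̃} is nonincreasing on [0,∞). -/

import Mathlib

open Finset

/-- The value ±1 of an Ising spin encoded by a Boolean. -/
noncomputable def spinval (b : Bool) : ℝ := if b then 1 else -1

/-- The (unnormalized) Gibbs weight of a spin configuration `σ` for the Ising model on a
finite vertex set `V` with symmetric coupling constants `J` and external field `f`:
`exp(Σ_{u~v} J_{uv} σ_u σ_v + Σ_u f_u σ_u)`, where the edge sum is written as half the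
double sum over ordered pairs. -/
noncomputable def isingWeight {V : Type*} [Fintype V] [DecidableEq V]
    (J : V → V → ℝ) (f : V → ℝ) (σ : V → Bool) : ℝ :=
  Real.exp ((∑ u : V, ∑ v : V, J u v * spinval (σ u) * spinval (σ v)) / 2
    + ∑ u : V, f u * spinval (σ u))

/-- Expectation `⟨X⟩_f` under the Ising Gibbs measure `μ_f`. -/
noncomputable def isingExp {V : Type*} [Fintype V] [DecidableEq V]
    (J : V → V → ℝ) (f : V → ℝ) (X : (V → Bool) → ℝ) : ℝ :=
  (∑ σ : V → Bool, X σ * isingWeight J f σ) / ∑ σ : V → Bool, isingWeight J f σ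

open scoped Classical in
/-- Conditional expectation `⟨X | E⟩_f` under the Ising Gibbs measure `μ_f`,
conditioned on the event `E`. -/
noncomputable def isingCondExp {V : Type*} [Fintype V] [DecidableEq V]
    (J : V → V → ℝ) (f : V → ℝ) (E : (V → Bool) → Prop) (X : (V → Bool) → ℝ) : ℝ :=
  (∑ σ ∈ Finset.univ.filter (fun σ => E σ), X σ * isingWeight J f σ) /
    ∑ σ ∈ Finset.univ.filter (fun σ => E σ), isingWeight J f σ

open scoped Classical in
/-- Probability `μ_f(E)` of an event `E` under the Ising Gibbs measure `μ_f`. -/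
noncomputable def isingProb {V : Type*} [Fintype V] [DecidableEq V]
    (J : V → V → ℝ) (f : V → ℝ) (E : (V → Bool) → Prop) : ℝ :=
  (∑ σ ∈ Finset.univ.filter (fun σ => E σ), isingWeight J f σ) /
    ∑ σ : V → Bool, isingWeight J f σ

namespace GHSaux

abbrev D := Bool × Bool × Bool × Bool

noncomputable def qh (d : D) : ℝ :=
  (spinval d.1 - spinval d.2.1 + spinval d.2.2.1 - spinval d.2.2.2) / 4
noncomputable def qc (d : D) : ℝ :=
  (spinval d.1 - spinval d.2.1 - spinval d.2.2.1 + spinval d.2.2.2) / 4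
noncomputable def th (d : D) : ℝ :=
  (spinval d.1 + spinval d.2.1 + spinval d.2.2.1 + spinval d.2.2.2) / 4
noncomputable def tc (d : D) : ℝ :=
  (spinval d.1 + spinval d.2.1 - spinval d.2.2.1 - spinval d.2.2.2) / 4

noncomputable def msum (a b c e : ℕ) : ℝ :=
  ∑ d : D, qh d ^ a * qc d ^ b * th d ^ c * tc d ^ e

lemma msum_formula (a b c e : ℕ) : msum a b c e =
    ((1 + (-1:ℝ)^a) * ((0:ℝ)^b * (0:ℝ)^c * (0:ℝ)^e)
      + (1 + (-1:ℝ)^b) * ((0:ℝ)^a * (0:ℝ)^c * (0:ℝ)^e)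
      + (1 + (-1:ℝ)^c) * ((0:ℝ)^a * (0:ℝ)^b * (0:ℝ)^e)
      + (1 + (-1:ℝ)^e) * ((0:ℝ)^a * (0:ℝ)^b * (0:ℝ)^c))
    + ((1/2:ℝ)^a * (1/2:ℝ)^b * (1/2:ℝ)^c * (1/2:ℝ)^e)
        * (1 + (-1:ℝ)^a * (-1:ℝ)^b) * (1 + (-1:ℝ)^c * (-1:ℝ)^e)
        * ((-1:ℝ)^b + (-1:ℝ)^e) := by
  have hh : ∀ n : ℕ, (-(1/2:ℝ))^n = (-1:ℝ)^n * (1/2:ℝ)^n := fun n => by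
    rw [neg_pow, mul_comm]
  simp only [msum, Fintype.sum_prod_type, Fintype.sum_bool, qh, qc, th, tc, spinval]
  norm_num
  simp only [hh]
  have h2 : ∀ n : ℕ, (-1:ℝ)^(n*2) = 1 := fun n => Even.neg_one_pow ⟨n, by ring⟩
  ring_nf
  simp only [h2]
  ring

lemma one_add_neg_one_pow_nonneg (n : ℕ) : (0:ℝ) ≤ 1 + (-1)^n := by
  rcases Nat.even_or_odd n with h | h
  · rw [h.neg_one_pow]; norm_num
  · rw [h.neg_one_pow]; norm_num

lemma msum_nonneg (a b c e : ℕ) (ha : Even a) : 0 ≤ msum a b c e := by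
  rw [msum_formula]
  have h0 : ∀ n : ℕ, (0:ℝ) ≤ (0:ℝ)^n := fun n => pow_nonneg le_rfl n
  have hhalf : ∀ n : ℕ, (0:ℝ) ≤ (1/2:ℝ)^n := fun n => pow_nonneg (by norm_num) n
  apply add_nonneg
  · apply add_nonneg
    apply add_nonneg
    apply add_nonneg
    all_goals
      exact mul_nonneg (one_add_neg_one_pow_nonneg _)
        (mul_nonneg (mul_nonneg (h0 _) (h0 _)) (h0 _))
  · rcases Nat.even_or_odd b with hb | hb
    · have : ((-1:ℝ)^b + (-1)^e) = 1 + (-1)^e := by rw [hb.neg_one_pow]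
      rw [this]
      apply mul_nonneg
      apply mul_nonneg
      apply mul_nonneg
      · exact mul_nonneg (mul_nonneg (mul_nonneg (hhalf _) (hhalf _)) (hhalf _)) (hhalf _)
      · rw [ha.neg_one_pow]; rw [hb.neg_one_pow]; norm_num
      · have := one_add_neg_one_pow_nonneg (c+e); rwa [pow_add] at this
      · exact one_add_neg_one_pow_nonneg e
    · rw [ha.neg_one_pow, hb.neg_one_pow]
      norm_num

lemma msum_nonpos (a b c e : ℕ) (ha : Odd a) : msum a b c e ≤ 0 := by
  rw [msum_formula]
  have ha0 : a ≠ 0 := by rintro rfl; exact Nat.not_odd_zero ha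
  have hz : (0:ℝ)^a = 0 := zero_pow ha0
  have hhalf : ∀ n : ℕ, (0:ℝ) ≤ (1/2:ℝ)^n := fun n => pow_nonneg (by norm_num) n
  rw [ha.neg_one_pow, hz]
  rcases Nat.even_or_odd b with hb | hb
  · rw [hb.neg_one_pow]
    norm_num
  · rcases Nat.even_or_odd e with he | he
    · rw [hb.neg_one_pow, he.neg_one_pow]
      norm_num
    · rw [hb.neg_one_pow, he.neg_one_pow]
      have hc' : (0:ℝ) ≤ 1 + (-1)^c * (-1) := by
        have := one_add_neg_one_pow_nonneg (c+1); rwa [pow_succ] at this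
      have hq := mul_nonneg (mul_nonneg (mul_nonneg (hhalf a) (hhalf b)) (hhalf c)) (hhalf e)
      nlinarith [hq, hc', mul_nonneg hq hc']

variable {V : Type*} [Fintype V] [DecidableEq V]

/-- exponent tuples -/
abbrev Ex (V : Type*) := V → ℕ × ℕ × ℕ × ℕ

noncomputable def mon (e : Ex V) (x : V → D) : ℝ :=
  ∏ u, (qh (x u) ^ (e u).1 * qc (x u) ^ (e u).2.1 * th (x u) ^ (e u).2.2.1
    * tc (x u) ^ (e u).2.2.2)

lemma sum_mon (e : Ex V) :
    ∑ x : V → D, mon e x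
      = ∏ u, msum (e u).1 (e u).2.1 (e u).2.2.1 (e u).2.2.2 := by
  unfold mon msum
  rw [← Fintype.prod_sum (fun u (d : D) => qh d ^ (e u).1 * qc d ^ (e u).2.1
    * th d ^ (e u).2.2.1 * tc d ^ (e u).2.2.2)]

lemma sum_mon_nonpos (e : Ex V) (h : Odd (∑ u, (e u).1)) :
    ∑ x : V → D, mon e x ≤ 0 := by
  rw [sum_mon]
  rw [Finset.odd_sum_iff_odd_card_odd] at h
  rw [← Finset.prod_filter_mul_prod_filter_not Finset.univ (fun u => Odd ((e u).1))]
  have h2 : (0:ℝ) ≤ ∏ u ∈ Finset.univ.filter (fun u => ¬ Odd ((e u).1)),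
      msum (e u).1 (e u).2.1 (e u).2.2.1 (e u).2.2.2 := by
    apply Finset.prod_nonneg
    intro u hu
    exact msum_nonneg _ _ _ _ (Nat.not_odd_iff_even.mp (Finset.mem_filter.mp hu).2)
  have h1 : ∏ u ∈ Finset.univ.filter (fun u => Odd ((e u).1)),
      msum (e u).1 (e u).2.1 (e u).2.2.1 (e u).2.2.2 ≤ 0 := by
    set s := Finset.univ.filter (fun u => Odd ((e u).1)) with hs
    have : ∀ u ∈ s, msum (e u).1 (e u).2.1 (e u).2.2.1 (e u).2.2.2
        = -1 * (-(msum (e u).1 (e u).2.1 (e u).2.2.1 (e u).2.2.2)) := by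
      intro u _; ring
    rw [Finset.prod_congr rfl this, Finset.prod_mul_distrib, Finset.prod_const,
      h.neg_one_pow]
    have : (0:ℝ) ≤ ∏ u ∈ s, -(msum (e u).1 (e u).2.1 (e u).2.2.1 (e u).2.2.2) := by
      apply Finset.prod_nonneg
      intro u hu
      have := msum_nonpos (e u).1 (e u).2.1 (e u).2.2.1 (e u).2.2.2
        ((Finset.mem_filter.mp hu).2)
      linarith
    linarith
  exact mul_nonpos_of_nonpos_of_nonneg h1 h2

lemma mon_add (e f : Ex V) (x : V → D) : mon (e + f) x = mon e x * mon f x := by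
  unfold mon
  rw [← Finset.prod_mul_distrib]
  apply Finset.prod_congr rfl
  intro u _
  simp only [Pi.add_apply, Prod.fst_add, Prod.snd_add, pow_add]
  ring

/-- nonnegative combinations of monomials with even total `qh`-degree -/
def Good (F : (V → D) → ℝ) : Prop :=
  ∃ (ι : Type) (s : Finset ι) (c : ι → ℝ) (e : ι → Ex V),
    (∀ i, 0 ≤ c i) ∧ (∀ i, Even (∑ u, (e i u).1)) ∧
      ∀ x, F x = ∑ i ∈ s, c i * mon (e i) x

lemma Good.add {F G : (V → D) → ℝ} (hF : Good F) (hG : Good G) :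
    Good (fun x => F x + G x) := by
  obtain ⟨ι, s, c, e, hc, he, hFx⟩ := hF
  obtain ⟨ι', s', c', e', hc', he', hGx⟩ := hG
  refine ⟨ι ⊕ ι', s.disjSum s', Sum.elim c c', Sum.elim e e', ?_, ?_, ?_⟩
  · rintro (i | i) <;> simp [hc, hc']
  · rintro (i | i) <;> simp [he, he']
  · intro x
    show F x + G x = _
    rw [Finset.sum_disjSum, hFx, hGx]
    simp

lemma Good.mul {F G : (V → D) → ℝ} (hF : Good F) (hG : Good G) :
    Good (fun x => F x * G x) := by
  obtain ⟨ι, s, c, e, hc, he, hFx⟩ := hF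
  obtain ⟨ι', s', c', e', hc', he', hGx⟩ := hG
  refine ⟨ι × ι', s ×ˢ s', fun p => c p.1 * c' p.2, fun p => e p.1 + e' p.2, ?_, ?_, ?_⟩
  · intro p; exact mul_nonneg (hc p.1) (hc' p.2)
  · intro p
    have : (∑ u, ((e p.1 + e' p.2) u).1) = (∑ u, (e p.1 u).1) + ∑ u, (e' p.2 u).1 := by
      rw [← Finset.sum_add_distrib]
      apply Finset.sum_congr rfl
      intro u _
      simp
    rw [this]
    exact (he p.1).add (he' p.2)
  · intro x
    show F x * G x = _
    rw [hFx, hGx, Finset.sum_mul_sum s s' _ _, Finset.sum_product]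
    apply Finset.sum_congr rfl; intro i _
    apply Finset.sum_congr rfl; intro j _
    rw [mon_add]
    ring

lemma Good.const (r : ℝ) (hr : 0 ≤ r) : Good (fun _ : V → D => r) := by
  refine ⟨Unit, Finset.univ, fun _ => r, fun _ => 0, fun _ => hr, by simp, ?_⟩
  intro x
  simp [mon]

lemma Good.pow {F : (V → D) → ℝ} (hF : Good F) (n : ℕ) : Good (fun x => F x ^ n) := by
  induction n with
  | zero => simpa using Good.const 1 zero_le_one
  | succ n ih =>
    have := ih.mul hF
    simpa [pow_succ] using this

lemma Good.sum {κ : Type*} (s : Finset κ) (f : κ → (V → D) → ℝ)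
    (h : ∀ k ∈ s, Good (f k)) : Good (fun x => ∑ k ∈ s, f k x) := by
  classical
  induction s using Finset.cons_induction with
  | empty => simpa using Good.const 0 le_rfl
  | cons k s hk ih =>
    have h1 : Good (f k) := h k (Finset.mem_cons_self k s)
    have h2 := ih (fun j hj => h j (Finset.mem_cons_of_mem hj))
    have h3 : (fun x => ∑ j ∈ Finset.cons k s hk, f j x)
        = fun x => f k x + ∑ j ∈ s, f j x := by
      funext x; rw [Finset.sum_cons]
    rw [h3]; exact h1.add h2

noncomputable def dlt (a b c : V) : Ex V :=
  fun u => (if u = a then 1 else 0, if u = b then 1 else 0, 0, if u = c then 1 else 0)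

lemma prod_pow_ite (a : V) (f : V → ℝ) :
    ∏ u, f u ^ (if u = a then 1 else 0) = f a := by
  have : ∀ u, f u ^ (if u = a then 1 else 0) = if u = a then f u else 1 := by
    intro u; split <;> simp
  rw [Finset.prod_congr rfl (fun u _ => this u), Finset.prod_ite_eq' Finset.univ a f]
  simp

lemma mon_dlt (a b c : V) (x : V → D) :
    mon (dlt a b c) x = qh (x a) * qc (x b) * tc (x c) := by
  unfold mon dlt
  simp only [Finset.prod_mul_distrib]
  rw [prod_pow_ite a (fun u => qh (x u)), prod_pow_ite b (fun u => qc (x u)),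
    prod_pow_ite c (fun u => tc (x u))]
  simp

lemma sum_dlt_fst (a b c : V) : (∑ u, (dlt a b c u).1) = 1 := by
  unfold dlt
  simp

lemma key_sum (a b c : V) {F : (V → D) → ℝ} (hF : Good F) :
    ∑ x : V → D, F x * (qh (x a) * qc (x b) * tc (x c)) ≤ 0 := by
  obtain ⟨ι, s, cf, e, hc, he, hFx⟩ := hF
  have step : ∀ x : V → D, F x * (qh (x a) * qc (x b) * tc (x c))
      = ∑ i ∈ s, cf i * mon (e i + dlt a b c) x := by
    intro x
    rw [hFx x, Finset.sum_mul]
    apply Finset.sum_congr rfl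
    intro i _
    rw [mon_add, mon_dlt]
    ring
  rw [Finset.sum_congr rfl (fun x _ => step x), Finset.sum_comm]
  apply Finset.sum_nonpos
  intro i _
  rw [← Finset.mul_sum]
  apply mul_nonpos_of_nonneg_of_nonpos (hc i)
  apply sum_mon_nonpos
  have : (∑ u, ((e i + dlt a b c) u).1) = (∑ u, (e i u).1) + ∑ u, (dlt a b c u).1 := by
    rw [← Finset.sum_add_distrib]
    apply Finset.sum_congr rfl
    intro u _
    simp
  rw [this, sum_dlt_fst]
  exact (he i).add_one

lemma key_exp (a b c : V) {H : (V → D) → ℝ} (hH : Good H) :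
    ∑ x : V → D, Real.exp (H x) * (qh (x a) * qc (x b) * tc (x c)) ≤ 0 := by
  have expand : ∀ x : V → D, Real.exp (H x) * (qh (x a) * qc (x b) * tc (x c))
      = ∑' n : ℕ, (H x) ^ n / n.factorial * (qh (x a) * qc (x b) * tc (x c)) := by
    intro x
    rw [tsum_mul_right]
    congr 1
    rw [Real.exp_eq_exp_ℝ, NormedSpace.exp_eq_tsum_div]
  rw [Finset.sum_congr rfl (fun x _ => expand x)]
  rw [← Summable.tsum_finsetSum (f := fun (x : V → D) (n : ℕ) =>
      (H x) ^ n / n.factorial * (qh (x a) * qc (x b) * tc (x c)))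
    (fun x _ => (Real.summable_pow_div_factorial (H x)).mul_right _)]
  apply tsum_nonpos
  intro n
  have : ∀ x : V → D, (H x) ^ n / n.factorial * (qh (x a) * qc (x b) * tc (x c))
      = ((n.factorial : ℝ))⁻¹ * ((H x) ^ n * (qh (x a) * qc (x b) * tc (x c))) := by
    intro x; ring
  rw [Finset.sum_congr rfl (fun x _ => this x), ← Finset.mul_sum]
  apply mul_nonpos_of_nonneg_of_nonpos (by positivity)
  exact key_sum a b c (hH.pow n)

section Ising

variable (J : V → V → ℝ) (h : V → ℝ)

/-- projections of a 4-copy configuration -/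
def pr1 (x : V → D) : V → Bool := fun u => (x u).1
def pr2 (x : V → D) : V → Bool := fun u => (x u).2.1
def pr3 (x : V → D) : V → Bool := fun u => (x u).2.2.1
def pr4 (x : V → D) : V → Bool := fun u => (x u).2.2.2

noncomputable def H4 (x : V → D) : ℝ :=
  (∑ u, ∑ v, 2 * J u v * (qh (x u) * qh (x v) + qc (x u) * qc (x v)
    + th (x u) * th (x v) + tc (x u) * tc (x v)))
  + ∑ u, 4 * h u * th (x u)

lemma sum_ind (u : V) : (∑ w, (if w = u then (1:ℕ) else 0)) = 1 := by simp

lemma Good.single (cc : ℝ) (hcc : 0 ≤ cc) (e : Ex V) (he : Even (∑ u, (e u).1)) :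
    Good (fun x => cc * mon e x) := by
  refine ⟨Unit, Finset.univ, fun _ => cc, fun _ => e, fun _ => hcc, fun _ => he, ?_⟩
  intro x; simp

noncomputable def eqh (u : V) : Ex V := fun w => (if w = u then 1 else 0, 0, 0, 0)
noncomputable def eqc (u : V) : Ex V := fun w => (0, if w = u then 1 else 0, 0, 0)
noncomputable def eth (u : V) : Ex V := fun w => (0, 0, if w = u then 1 else 0, 0)
noncomputable def etc (u : V) : Ex V := fun w => (0, 0, 0, if w = u then 1 else 0)

lemma mon_eqh (u : V) (x : V → D) : mon (eqh u) x = qh (x u) := by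
  unfold mon eqh
  simp only [Finset.prod_mul_distrib]
  rw [prod_pow_ite u (fun w => qh (x w))]
  simp

lemma mon_eqc (u : V) (x : V → D) : mon (eqc u) x = qc (x u) := by
  unfold mon eqc
  simp only [Finset.prod_mul_distrib]
  rw [prod_pow_ite u (fun w => qc (x w))]
  simp

lemma mon_eth (u : V) (x : V → D) : mon (eth u) x = th (x u) := by
  unfold mon eth
  simp only [Finset.prod_mul_distrib]
  rw [prod_pow_ite u (fun w => th (x w))]
  simp

lemma mon_etc (u : V) (x : V → D) : mon (etc u) x = tc (x u) := by
  unfold mon etc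
  simp only [Finset.prod_mul_distrib]
  rw [prod_pow_ite u (fun w => tc (x w))]
  simp

lemma H4_good (hJ : ∀ u v, 0 ≤ J u v) (hh : ∀ u, 0 ≤ h u) : Good (H4 J h) := by
  apply Good.add
  · apply Good.sum
    intro u _
    apply Good.sum
    intro v _
    have hrw : (fun x : V → D => 2 * J u v * (qh (x u) * qh (x v) + qc (x u) * qc (x v)
        + th (x u) * th (x v) + tc (x u) * tc (x v)))
        = fun x => (2 * J u v * mon (eqh u + eqh v) x + 2 * J u v * mon (eqc u + eqc v) x)
          + (2 * J u v * mon (eth u + eth v) x + 2 * J u v * mon (etc u + etc v) x) := by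
      funext x
      rw [mon_add, mon_add, mon_add, mon_add, mon_eqh, mon_eqh, mon_eqc, mon_eqc,
        mon_eth, mon_eth, mon_etc, mon_etc]
      ring
    rw [hrw]
    have hc' : 0 ≤ 2 * J u v := by linarith [hJ u v]
    have heven : ∀ (w1 w2 : V), Even (∑ z, ((eqh w1 + eqh w2) z).1) := by
      intro w1 w2
      have : (∑ z, ((eqh w1 + eqh w2) z).1)
          = (∑ z, (eqh w1 z).1) + ∑ z, (eqh w2 z).1 := by
        rw [← Finset.sum_add_distrib]; apply Finset.sum_congr rfl; intro z _; simp
      rw [this]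
      unfold eqh
      simp only
      rw [sum_ind, sum_ind]
      exact ⟨1, rfl⟩
    have hzero : ∀ (e : Ex V), (∀ z, (e z).1 = 0) → Even (∑ z, (e z).1) := by
      intro e hz
      have : (∑ z, (e z).1) = 0 := Finset.sum_eq_zero (fun z _ => hz z)
      rw [this]; exact Even.zero
    have g1 := Good.single (V := V) _ hc' _ (heven u v)
    have g2 := Good.single (V := V) (2 * J u v) hc' (eqc u + eqc v)
      (hzero _ (fun z => by simp [eqc]))
    have g3 := Good.single (V := V) (2 * J u v) hc' (eth u + eth v)
      (hzero _ (fun z => by simp [eth]))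
    have g4 := Good.single (V := V) (2 * J u v) hc' (etc u + etc v)
      (hzero _ (fun z => by simp [etc]))
    exact (g1.add g2).add (g3.add g4)
  · apply Good.sum
    intro u _
    have hrw : (fun x : V → D => 4 * h u * th (x u))
        = fun x => 4 * h u * mon (eth u) x := by
      funext x; rw [mon_eth]
    rw [hrw]
    apply Good.single _ (by linarith [hh u])
    have : (∑ z, ((eth u) z).1) = 0 := Finset.sum_eq_zero (fun z _ => by simp [eth])
    rw [this]
    exact Even.zero
end Ising

section Ising2

variable (J : V → V → ℝ) (h : V → ℝ)

lemma weight4 (x : V → D) :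
    isingWeight J h (pr1 x) * isingWeight J h (pr2 x) * isingWeight J h (pr3 x)
      * isingWeight J h (pr4 x) = Real.exp (H4 J h x) := by
  unfold isingWeight pr1 pr2 pr3 pr4
  rw [← Real.exp_add, ← Real.exp_add, ← Real.exp_add]
  congr 1
  have hP : (∑ u, ∑ v, J u v * spinval ((x u).1) * spinval ((x v).1))
      + (∑ u, ∑ v, J u v * spinval ((x u).2.1) * spinval ((x v).2.1))
      + ((∑ u, ∑ v, J u v * spinval ((x u).2.2.1) * spinval ((x v).2.2.1))
      + (∑ u, ∑ v, J u v * spinval ((x u).2.2.2) * spinval ((x v).2.2.2)))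
      = 2 * ∑ u, ∑ v, 2 * J u v * (qh (x u) * qh (x v) + qc (x u) * qc (x v)
        + th (x u) * th (x v) + tc (x u) * tc (x v)) := by
    rw [Finset.mul_sum, ← Finset.sum_add_distrib, ← Finset.sum_add_distrib,
      ← Finset.sum_add_distrib]
    apply Finset.sum_congr rfl
    intro u _
    rw [Finset.mul_sum, ← Finset.sum_add_distrib, ← Finset.sum_add_distrib,
      ← Finset.sum_add_distrib]
    apply Finset.sum_congr rfl
    intro v _
    unfold qh qc th tc
    ring
  have hF : (∑ u, h u * spinval ((x u).1)) + (∑ u, h u * spinval ((x u).2.1))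
      + ((∑ u, h u * spinval ((x u).2.2.1)) + (∑ u, h u * spinval ((x u).2.2.2)))
      = ∑ u, 4 * h u * th (x u) := by
    rw [← Finset.sum_add_distrib, ← Finset.sum_add_distrib, ← Finset.sum_add_distrib]
    apply Finset.sum_congr rfl
    intro u _
    unfold th
    ring
  unfold H4
  linarith [hP, hF]

end Ising2

def quadEquiv (V : Type*) :
    ((V → Bool) × (V → Bool) × (V → Bool) × (V → Bool)) ≃ (V → D) where
  toFun q := fun u => (q.1 u, q.2.1 u, q.2.2.1 u, q.2.2.2 u)
  invFun x := (pr1 x, pr2 x, pr3 x, pr4 x)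
  left_inv q := rfl
  right_inv x := rfl

lemma sum2 {A B : Type*} [Fintype A] [Fintype B] (F : A → ℝ) (G : B → ℝ) :
    ∑ p : A × B, F p.1 * G p.2 = (∑ a, F a) * (∑ b, G b) := by
  rw [Fintype.sum_prod_type]
  exact (Fintype.sum_mul_sum _ _).symm

lemma sum_sep4 (f g k l : (V → Bool) → ℝ) :
    ∑ x : V → D, f (pr1 x) * g (pr2 x) * k (pr3 x) * l (pr4 x)
      = (∑ σ, f σ) * (∑ σ, g σ) * (∑ σ, k σ) * (∑ σ, l σ) := by
  rw [← Fintype.sum_equiv (quadEquiv V)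
    (fun q => f q.1 * g q.2.1 * k q.2.2.1 * l q.2.2.2)
    (fun x => f (pr1 x) * g (pr2 x) * k (pr3 x) * l (pr4 x)) (fun q => rfl)]
  have h23 : ∑ t : (V → Bool) × (V → Bool), k t.1 * l t.2
      = (∑ σ, k σ) * (∑ σ, l σ) := sum2 k l
  have h2 : ∑ t : (V → Bool) × (V → Bool) × (V → Bool),
      g t.1 * ((fun p : (V → Bool) × (V → Bool) => k p.1 * l p.2) t.2)
      = (∑ σ, g σ) * ((∑ σ, k σ) * (∑ σ, l σ)) := by
    rw [sum2 g (fun p : (V → Bool) × (V → Bool) => k p.1 * l p.2), h23]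
  have h1 : ∑ q : (V → Bool) × (V → Bool) × (V → Bool) × (V → Bool),
      f q.1 * ((fun t : (V → Bool) × (V → Bool) × (V → Bool) =>
        g t.1 * ((fun p : (V → Bool) × (V → Bool) => k p.1 * l p.2) t.2)) q.2)
      = (∑ σ, f σ) * ((∑ σ, g σ) * ((∑ σ, k σ) * (∑ σ, l σ))) := by
    rw [sum2 f (fun t : (V → Bool) × (V → Bool) × (V → Bool) =>
        g t.1 * ((fun p : (V → Bool) × (V → Bool) => k p.1 * l p.2) t.2)), h2]
  calc ∑ q : (V → Bool) × (V → Bool) × (V → Bool) × (V → Bool),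
        f q.1 * g q.2.1 * k q.2.2.1 * l q.2.2.2
      = ∑ q : (V → Bool) × (V → Bool) × (V → Bool) × (V → Bool),
        f q.1 * ((fun t : (V → Bool) × (V → Bool) × (V → Bool) =>
          g t.1 * ((fun p : (V → Bool) × (V → Bool) => k p.1 * l p.2) t.2)) q.2) :=
        Finset.sum_congr rfl (fun q _ => by ring)
    _ = (∑ σ, f σ) * ((∑ σ, g σ) * ((∑ σ, k σ) * (∑ σ, l σ))) := h1
    _ = (∑ σ, f σ) * (∑ σ, g σ) * (∑ σ, k σ) * (∑ σ, l σ) := by ring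

section Main

variable (J : V → V → ℝ) (h : V → ℝ)

noncomputable def WF (f : (V → Bool) → ℝ) : (V → Bool) → ℝ :=
  fun σ => f σ * isingWeight J h σ

noncomputable def SS (f : (V → Bool) → ℝ) : ℝ := ∑ σ, f σ * isingWeight J h σ

lemma SSW (f : (V → Bool) → ℝ) : (∑ σ, WF J h f σ) = SS J h f := rfl

noncomputable def sv1 (a : V) : (V → Bool) → ℝ := fun σ => spinval (σ a)
noncomputable def sv2 (a b : V) : (V → Bool) → ℝ := fun σ => spinval (σ a) * spinval (σ b)
noncomputable def sv3 (a b c : V) : (V → Bool) → ℝ :=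
  fun σ => spinval (σ a) * spinval (σ b) * spinval (σ c)
noncomputable def one1 : (V → Bool) → ℝ := fun _ => 1

lemma K_nonpos (hJ : ∀ u v, 0 ≤ J u v) (hh : ∀ u, 0 ≤ h u) (a b c : V) :
    ∑ x : V → D, (isingWeight J h (pr1 x) * isingWeight J h (pr2 x)
      * isingWeight J h (pr3 x) * isingWeight J h (pr4 x))
      * (qh (x a) * qc (x b) * tc (x c)) ≤ 0 := by
  have hw : ∀ x : V → D, (isingWeight J h (pr1 x) * isingWeight J h (pr2 x)
      * isingWeight J h (pr3 x) * isingWeight J h (pr4 x))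
      * (qh (x a) * qc (x b) * tc (x c))
      = Real.exp (H4 J h x) * (qh (x a) * qc (x b) * tc (x c)) := by
    intro x; rw [weight4]
  rw [Finset.sum_congr rfl (fun x _ => hw x)]
  exact key_exp a b c (H4_good J h hJ hh)

lemma SS_one_pos : 0 < SS J h one1 := by
  unfold SS one1
  apply Finset.sum_pos
  · intro σ _
    rw [one_mul]
    exact Real.exp_pos _
  · exact Finset.univ_nonempty

lemma ghsU (hJ : ∀ u v, 0 ≤ J u v) (hh : ∀ u, 0 ≤ h u) (a b c : V) :
    (SS J h one1)^2 * SS J h (sv3 a b c)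
      - SS J h one1 * (SS J h (sv2 a b) * SS J h (sv1 c)
        + SS J h (sv2 a c) * SS J h (sv1 b) + SS J h (sv2 b c) * SS J h (sv1 a))
      + 2 * SS J h (sv1 a) * SS J h (sv1 b) * SS J h (sv1 c) ≤ 0 := by
  have hZ := SS_one_pos J h
  set L4 : ℝ := ∑ x : V → D, (isingWeight J h (pr1 x) * isingWeight J h (pr2 x)
      * isingWeight J h (pr3 x) * isingWeight J h (pr4 x))
      * (((spinval ((x a).1) - spinval ((x a).2.1))/2
          * ((spinval ((x b).1) - spinval ((x b).2.1))/2)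
        - (spinval ((x a).2.2.1) - spinval ((x a).2.2.2))/2
          * ((spinval ((x b).2.2.1) - spinval ((x b).2.2.2))/2))
        * ((spinval ((x c).1) + spinval ((x c).2.1))/2
          - (spinval ((x c).2.2.1) + spinval ((x c).2.2.2))/2)) with hL4
  have hL4le : L4 ≤ 0 := by
    have hsplit : ∀ x : V → D, (isingWeight J h (pr1 x) * isingWeight J h (pr2 x)
        * isingWeight J h (pr3 x) * isingWeight J h (pr4 x))
        * (((spinval ((x a).1) - spinval ((x a).2.1))/2
            * ((spinval ((x b).1) - spinval ((x b).2.1))/2)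
          - (spinval ((x a).2.2.1) - spinval ((x a).2.2.2))/2
            * ((spinval ((x b).2.2.1) - spinval ((x b).2.2.2))/2))
          * ((spinval ((x c).1) + spinval ((x c).2.1))/2
            - (spinval ((x c).2.2.1) + spinval ((x c).2.2.2))/2))
        = 4 * ((isingWeight J h (pr1 x) * isingWeight J h (pr2 x)
            * isingWeight J h (pr3 x) * isingWeight J h (pr4 x))
            * (qh (x a) * qc (x b) * tc (x c)))
          + 4 * ((isingWeight J h (pr1 x) * isingWeight J h (pr2 x)
            * isingWeight J h (pr3 x) * isingWeight J h (pr4 x))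
            * (qh (x b) * qc (x a) * tc (x c))) := by
      intro x
      unfold qh qc tc
      ring
    rw [hL4, Finset.sum_congr rfl (fun x _ => hsplit x), Finset.sum_add_distrib,
      ← Finset.mul_sum, ← Finset.mul_sum]
    have k1 := K_nonpos J h hJ hh a b c
    have k2 := K_nonpos J h hJ hh b a c
    nlinarith [k1, k2]
  have hL4eq : L4 = (SS J h one1 / 2) * ((SS J h one1)^2 * SS J h (sv3 a b c)
      - SS J h one1 * (SS J h (sv2 a b) * SS J h (sv1 c)
        + SS J h (sv2 a c) * SS J h (sv1 b) + SS J h (sv2 b c) * SS J h (sv1 a))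
      + 2 * SS J h (sv1 a) * SS J h (sv1 b) * SS J h (sv1 c)) := by
    have expand : ∀ x : V → D, (isingWeight J h (pr1 x) * isingWeight J h (pr2 x)
        * isingWeight J h (pr3 x) * isingWeight J h (pr4 x))
        * (((spinval ((x a).1) - spinval ((x a).2.1))/2
            * ((spinval ((x b).1) - spinval ((x b).2.1))/2)
          - (spinval ((x a).2.2.1) - spinval ((x a).2.2.2))/2
            * ((spinval ((x b).2.2.1) - spinval ((x b).2.2.2))/2))
          * ((spinval ((x c).1) + spinval ((x c).2.1))/2
            - (spinval ((x c).2.2.1) + spinval ((x c).2.2.2))/2))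
        = (1/8) * (
      WF J h (sv3 a b c) (pr1 x) * WF J h (one1) (pr2 x) * WF J h (one1) (pr3 x) * WF J h (one1) (pr4 x)
       + WF J h (sv2 a b) (pr1 x) * WF J h (sv1 c) (pr2 x) * WF J h (one1) (pr3 x) * WF J h (one1) (pr4 x)
       - WF J h (sv2 a c) (pr1 x) * WF J h (sv1 b) (pr2 x) * WF J h (one1) (pr3 x) * WF J h (one1) (pr4 x)
       - WF J h (sv1 a) (pr1 x) * WF J h (sv2 b c) (pr2 x) * WF J h (one1) (pr3 x) * WF J h (one1) (pr4 x)
       - WF J h (sv2 b c) (pr1 x) * WF J h (sv1 a) (pr2 x) * WF J h (one1) (pr3 x) * WF J h (one1) (pr4 x)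
       - WF J h (sv1 b) (pr1 x) * WF J h (sv2 a c) (pr2 x) * WF J h (one1) (pr3 x) * WF J h (one1) (pr4 x)
       + WF J h (sv1 c) (pr1 x) * WF J h (sv2 a b) (pr2 x) * WF J h (one1) (pr3 x) * WF J h (one1) (pr4 x)
       + WF J h (one1) (pr1 x) * WF J h (sv3 a b c) (pr2 x) * WF J h (one1) (pr3 x) * WF J h (one1) (pr4 x)
       - WF J h (sv2 a b) (pr1 x) * WF J h (one1) (pr2 x) * WF J h (sv1 c) (pr3 x) * WF J h (one1) (pr4 x)
       - WF J h (sv2 a b) (pr1 x) * WF J h (one1) (pr2 x) * WF J h (one1) (pr3 x) * WF J h (sv1 c) (pr4 x)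
       + WF J h (sv1 a) (pr1 x) * WF J h (sv1 b) (pr2 x) * WF J h (sv1 c) (pr3 x) * WF J h (one1) (pr4 x)
       + WF J h (sv1 a) (pr1 x) * WF J h (sv1 b) (pr2 x) * WF J h (one1) (pr3 x) * WF J h (sv1 c) (pr4 x)
       + WF J h (sv1 b) (pr1 x) * WF J h (sv1 a) (pr2 x) * WF J h (sv1 c) (pr3 x) * WF J h (one1) (pr4 x)
       + WF J h (sv1 b) (pr1 x) * WF J h (sv1 a) (pr2 x) * WF J h (one1) (pr3 x) * WF J h (sv1 c) (pr4 x)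
       - WF J h (one1) (pr1 x) * WF J h (sv2 a b) (pr2 x) * WF J h (sv1 c) (pr3 x) * WF J h (one1) (pr4 x)
       - WF J h (one1) (pr1 x) * WF J h (sv2 a b) (pr2 x) * WF J h (one1) (pr3 x) * WF J h (sv1 c) (pr4 x)
       - WF J h (sv1 c) (pr1 x) * WF J h (one1) (pr2 x) * WF J h (sv2 a b) (pr3 x) * WF J h (one1) (pr4 x)
       + WF J h (sv1 c) (pr1 x) * WF J h (one1) (pr2 x) * WF J h (sv1 a) (pr3 x) * WF J h (sv1 b) (pr4 x)
       + WF J h (sv1 c) (pr1 x) * WF J h (one1) (pr2 x) * WF J h (sv1 b) (pr3 x) * WF J h (sv1 a) (pr4 x)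
       - WF J h (sv1 c) (pr1 x) * WF J h (one1) (pr2 x) * WF J h (one1) (pr3 x) * WF J h (sv2 a b) (pr4 x)
       - WF J h (one1) (pr1 x) * WF J h (sv1 c) (pr2 x) * WF J h (sv2 a b) (pr3 x) * WF J h (one1) (pr4 x)
       + WF J h (one1) (pr1 x) * WF J h (sv1 c) (pr2 x) * WF J h (sv1 a) (pr3 x) * WF J h (sv1 b) (pr4 x)
       + WF J h (one1) (pr1 x) * WF J h (sv1 c) (pr2 x) * WF J h (sv1 b) (pr3 x) * WF J h (sv1 a) (pr4 x)
       - WF J h (one1) (pr1 x) * WF J h (sv1 c) (pr2 x) * WF J h (one1) (pr3 x) * WF J h (sv2 a b) (pr4 x)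
       + WF J h (one1) (pr1 x) * WF J h (one1) (pr2 x) * WF J h (sv3 a b c) (pr3 x) * WF J h (one1) (pr4 x)
       + WF J h (one1) (pr1 x) * WF J h (one1) (pr2 x) * WF J h (sv2 a b) (pr3 x) * WF J h (sv1 c) (pr4 x)
       - WF J h (one1) (pr1 x) * WF J h (one1) (pr2 x) * WF J h (sv2 a c) (pr3 x) * WF J h (sv1 b) (pr4 x)
       - WF J h (one1) (pr1 x) * WF J h (one1) (pr2 x) * WF J h (sv1 a) (pr3 x) * WF J h (sv2 b c) (pr4 x)
       - WF J h (one1) (pr1 x) * WF J h (one1) (pr2 x) * WF J h (sv2 b c) (pr3 x) * WF J h (sv1 a) (pr4 x)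
       - WF J h (one1) (pr1 x) * WF J h (one1) (pr2 x) * WF J h (sv1 b) (pr3 x) * WF J h (sv2 a c) (pr4 x)
       + WF J h (one1) (pr1 x) * WF J h (one1) (pr2 x) * WF J h (sv1 c) (pr3 x) * WF J h (sv2 a b) (pr4 x)
       + WF J h (one1) (pr1 x) * WF J h (one1) (pr2 x) * WF J h (one1) (pr3 x) * WF J h (sv3 a b c) (pr4 x)) := by
      intro x
      simp only [WF, sv1, sv2, sv3, one1, pr1, pr2, pr3, pr4]
      ring
    rw [hL4, Finset.sum_congr rfl (fun x _ => expand x), ← Finset.mul_sum]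
    simp only [Finset.sum_add_distrib, Finset.sum_sub_distrib]
    rw [sum_sep4 (WF J h (sv3 a b c)) (WF J h (one1)) (WF J h (one1)) (WF J h (one1)),
      sum_sep4 (WF J h (sv2 a b)) (WF J h (sv1 c)) (WF J h (one1)) (WF J h (one1)),
      sum_sep4 (WF J h (sv2 a c)) (WF J h (sv1 b)) (WF J h (one1)) (WF J h (one1)),
      sum_sep4 (WF J h (sv1 a)) (WF J h (sv2 b c)) (WF J h (one1)) (WF J h (one1)),
      sum_sep4 (WF J h (sv2 b c)) (WF J h (sv1 a)) (WF J h (one1)) (WF J h (one1)),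
      sum_sep4 (WF J h (sv1 b)) (WF J h (sv2 a c)) (WF J h (one1)) (WF J h (one1)),
      sum_sep4 (WF J h (sv1 c)) (WF J h (sv2 a b)) (WF J h (one1)) (WF J h (one1)),
      sum_sep4 (WF J h (one1)) (WF J h (sv3 a b c)) (WF J h (one1)) (WF J h (one1)),
      sum_sep4 (WF J h (sv2 a b)) (WF J h (one1)) (WF J h (sv1 c)) (WF J h (one1)),
      sum_sep4 (WF J h (sv2 a b)) (WF J h (one1)) (WF J h (one1)) (WF J h (sv1 c)),
      sum_sep4 (WF J h (sv1 a)) (WF J h (sv1 b)) (WF J h (sv1 c)) (WF J h (one1)),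
      sum_sep4 (WF J h (sv1 a)) (WF J h (sv1 b)) (WF J h (one1)) (WF J h (sv1 c)),
      sum_sep4 (WF J h (sv1 b)) (WF J h (sv1 a)) (WF J h (sv1 c)) (WF J h (one1)),
      sum_sep4 (WF J h (sv1 b)) (WF J h (sv1 a)) (WF J h (one1)) (WF J h (sv1 c)),
      sum_sep4 (WF J h (one1)) (WF J h (sv2 a b)) (WF J h (sv1 c)) (WF J h (one1)),
      sum_sep4 (WF J h (one1)) (WF J h (sv2 a b)) (WF J h (one1)) (WF J h (sv1 c)),
      sum_sep4 (WF J h (sv1 c)) (WF J h (one1)) (WF J h (sv2 a b)) (WF J h (one1)),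
      sum_sep4 (WF J h (sv1 c)) (WF J h (one1)) (WF J h (sv1 a)) (WF J h (sv1 b)),
      sum_sep4 (WF J h (sv1 c)) (WF J h (one1)) (WF J h (sv1 b)) (WF J h (sv1 a)),
      sum_sep4 (WF J h (sv1 c)) (WF J h (one1)) (WF J h (one1)) (WF J h (sv2 a b)),
      sum_sep4 (WF J h (one1)) (WF J h (sv1 c)) (WF J h (sv2 a b)) (WF J h (one1)),
      sum_sep4 (WF J h (one1)) (WF J h (sv1 c)) (WF J h (sv1 a)) (WF J h (sv1 b)),
      sum_sep4 (WF J h (one1)) (WF J h (sv1 c)) (WF J h (sv1 b)) (WF J h (sv1 a)),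
      sum_sep4 (WF J h (one1)) (WF J h (sv1 c)) (WF J h (one1)) (WF J h (sv2 a b)),
      sum_sep4 (WF J h (one1)) (WF J h (one1)) (WF J h (sv3 a b c)) (WF J h (one1)),
      sum_sep4 (WF J h (one1)) (WF J h (one1)) (WF J h (sv2 a b)) (WF J h (sv1 c)),
      sum_sep4 (WF J h (one1)) (WF J h (one1)) (WF J h (sv2 a c)) (WF J h (sv1 b)),
      sum_sep4 (WF J h (one1)) (WF J h (one1)) (WF J h (sv1 a)) (WF J h (sv2 b c)),
      sum_sep4 (WF J h (one1)) (WF J h (one1)) (WF J h (sv2 b c)) (WF J h (sv1 a)),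
      sum_sep4 (WF J h (one1)) (WF J h (one1)) (WF J h (sv1 b)) (WF J h (sv2 a c)),
      sum_sep4 (WF J h (one1)) (WF J h (one1)) (WF J h (sv1 c)) (WF J h (sv2 a b)),
      sum_sep4 (WF J h (one1)) (WF J h (one1)) (WF J h (one1)) (WF J h (sv3 a b c))]
    simp only [SSW]
    ring
  nlinarith [hL4le, hL4eq, hZ]

end Main

section Calc

variable (J : V → V → ℝ) (g : V → ℝ)

noncomputable def AA : (V → Bool) → ℝ :=
  fun σ => (∑ p, ∑ q, J p q * spinval (σ p) * spinval (σ q))/2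
noncomputable def BB : (V → Bool) → ℝ := fun σ => ∑ x, g x * spinval (σ x)
noncomputable def NV (X : (V → Bool) → ℝ) (l : ℝ) : ℝ :=
  ∑ σ, X σ * Real.exp (AA J σ + l * BB g σ)

lemma weight_eq (l : ℝ) (σ : V → Bool) :
    isingWeight J (fun x => l * g x) σ = Real.exp (AA J σ + l * BB g σ) := by
  unfold isingWeight AA BB
  congr 2
  rw [Finset.mul_sum]
  apply Finset.sum_congr rfl
  intros
  ring

lemma NV_eq_SS (l : ℝ) (X : (V → Bool) → ℝ) :
    NV J g X l = SS J (fun x => l * g x) X := by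
  unfold NV SS
  apply Finset.sum_congr rfl
  intro σ _
  rw [weight_eq]

lemma NV_pos (l : ℝ) : 0 < NV J g one1 l := by
  rw [NV_eq_SS]
  exact SS_one_pos _ _

lemma NV_hasDeriv (X : (V → Bool) → ℝ) (l : ℝ) :
    HasDerivAt (fun t => NV J g X t) (NV J g (fun σ => X σ * BB g σ) l) l := by
  unfold NV
  apply HasDerivAt.fun_sum
  intro σ _
  have h1 : HasDerivAt (fun t : ℝ => AA J σ + t * BB g σ) (BB g σ) l := by
    simpa using ((hasDerivAt_id l).mul_const (BB g σ)).const_add (AA J σ)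
  have h2 := (h1.exp).const_mul (X σ)
  convert h2 using 1
  · rfl
  ring

lemma NV_lin (X : (V → Bool) → ℝ) (l : ℝ) :
    NV J g (fun σ => X σ * BB g σ) l
      = ∑ w, g w * NV J g (fun σ => X σ * spinval (σ w)) l := by
  unfold NV BB
  have hpt : ∀ σ : V → Bool,
      (fun σ => X σ * ∑ x, g x * spinval (σ x)) σ
        * Real.exp (AA J σ + l * ∑ x, g x * spinval (σ x))
      = ∑ w, g w * ((fun σ => X σ * spinval (σ w)) σ
        * Real.exp (AA J σ + l * ∑ x, g x * spinval (σ x))) := by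
    intro σ
    simp only
    rw [Finset.mul_sum, Finset.sum_mul]
    apply Finset.sum_congr rfl
    intros
    ring
  rw [Finset.sum_congr rfl (fun σ _ => hpt σ), Finset.sum_comm]
  exact Finset.sum_congr rfl (fun w _ => (Finset.mul_sum _ _ _).symm)

end Calc

end GHSaux

open GHSaux

/-- **Remark 1.4 (GHS consequence).** For a nonnegative external field `g̃ : V → [0,∞)`, the
truncated correlation `⟨σ_u σ_v⟩_{λg̃} − ⟨σ_u⟩_{λg̃} ⟨σ_v⟩_{λg̃}` is nonincreasing in
`λ ∈ [0,∞)`. -/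
theorem truncated_correlation_antitone_in_nonneg_field
    {V : Type*} [Fintype V] [DecidableEq V]
    (J : V → V → ℝ) (hJsymm : ∀ u v, J u v = J v u) (hJnonneg : ∀ u v, 0 ≤ J u v)
    (gt : V → ℝ) (hgt : ∀ x, 0 ≤ gt x) (u v : V) :
    AntitoneOn (fun l : ℝ =>
        isingExp J (fun x => l * gt x) (fun σ => spinval (σ u) * spinval (σ v))
          - isingExp J (fun x => l * gt x) (fun σ => spinval (σ u))
            * isingExp J (fun x => l * gt x) (fun σ => spinval (σ v)))
      (Set.Ici 0) := by
  classical
  have hfun : (fun l : ℝ =>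
        isingExp J (fun x => l * gt x) (fun σ => spinval (σ u) * spinval (σ v))
          - isingExp J (fun x => l * gt x) (fun σ => spinval (σ u))
            * isingExp J (fun x => l * gt x) (fun σ => spinval (σ v)))
      = fun l : ℝ => NV J gt (sv2 u v) l / NV J gt one1 l
          - (NV J gt (sv1 u) l / NV J gt one1 l) * (NV J gt (sv1 v) l / NV J gt one1 l) := by
    funext l
    have hE : ∀ X : (V → Bool) → ℝ, isingExp J (fun x => l * gt x) X
        = NV J gt X l / NV J gt one1 l := by
      intro X
      unfold isingExp NV one1
      congr 1
      · exact Finset.sum_congr rfl (fun σ _ => by rw [weight_eq])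
      · exact Finset.sum_congr rfl (fun σ _ => by rw [weight_eq, one_mul])
    rw [hE, hE, hE]
    rfl
  rw [hfun]
  have hden : ∀ l : ℝ, NV J gt one1 l ≠ 0 := fun l => (NV_pos J gt l).ne'
  have hder : ∀ l : ℝ, HasDerivAt (fun l : ℝ => NV J gt (sv2 u v) l / NV J gt one1 l
      - (NV J gt (sv1 u) l / NV J gt one1 l) * (NV J gt (sv1 v) l / NV J gt one1 l))
      ((NV J gt (fun σ => sv2 u v σ * BB gt σ) l * NV J gt one1 l
          - NV J gt (sv2 u v) l * NV J gt (fun σ => one1 σ * BB gt σ) l) / (NV J gt one1 l)^2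
        - (((NV J gt (fun σ => sv1 u σ * BB gt σ) l * NV J gt one1 l
            - NV J gt (sv1 u) l * NV J gt (fun σ => one1 σ * BB gt σ) l) / (NV J gt one1 l)^2)
              * (NV J gt (sv1 v) l / NV J gt one1 l)
          + (NV J gt (sv1 u) l / NV J gt one1 l)
            * ((NV J gt (fun σ => sv1 v σ * BB gt σ) l * NV J gt one1 l
              - NV J gt (sv1 v) l * NV J gt (fun σ => one1 σ * BB gt σ) l)
                / (NV J gt one1 l)^2))) l := by
    intro l
    exact ((NV_hasDeriv J gt (sv2 u v) l).div (NV_hasDeriv J gt one1 l) (hden l)).sub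
      (((NV_hasDeriv J gt (sv1 u) l).div (NV_hasDeriv J gt one1 l) (hden l)).mul
        ((NV_hasDeriv J gt (sv1 v) l).div (NV_hasDeriv J gt one1 l) (hden l)))
  have hnp : ∀ l : ℝ, 0 ≤ l →
      ((NV J gt (fun σ => sv2 u v σ * BB gt σ) l * NV J gt one1 l
          - NV J gt (sv2 u v) l * NV J gt (fun σ => one1 σ * BB gt σ) l) / (NV J gt one1 l)^2
        - (((NV J gt (fun σ => sv1 u σ * BB gt σ) l * NV J gt one1 l
            - NV J gt (sv1 u) l * NV J gt (fun σ => one1 σ * BB gt σ) l) / (NV J gt one1 l)^2)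
              * (NV J gt (sv1 v) l / NV J gt one1 l)
          + (NV J gt (sv1 u) l / NV J gt one1 l)
            * ((NV J gt (fun σ => sv1 v σ * BB gt σ) l * NV J gt one1 l
              - NV J gt (sv1 v) l * NV J gt (fun σ => one1 σ * BB gt σ) l)
                / (NV J gt one1 l)^2))) ≤ 0 := by
    intro l hl
    have hZ := NV_pos J gt l
    have lin1 : NV J gt (fun σ => sv2 u v σ * BB gt σ) l
        = ∑ w, gt w * NV J gt (sv3 u v w) l := NV_lin J gt (sv2 u v) l
    have lin2 : NV J gt (fun σ => sv1 u σ * BB gt σ) l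
        = ∑ w, gt w * NV J gt (sv2 u w) l := NV_lin J gt (sv1 u) l
    have lin3 : NV J gt (fun σ => sv1 v σ * BB gt σ) l
        = ∑ w, gt w * NV J gt (sv2 v w) l := NV_lin J gt (sv1 v) l
    have lin0 : NV J gt (fun σ => one1 σ * BB gt σ) l
        = ∑ w, gt w * NV J gt (sv1 w) l := by
      rw [NV_lin J gt one1 l]
      apply Finset.sum_congr rfl
      intro w _
      have : (fun σ : V → Bool => one1 σ * spinval (σ w)) = sv1 w := by
        funext σ; exact one_mul _
      rw [this]
    rw [lin1, lin2, lin3, lin0]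
    have hU : ∀ w : V, (NV J gt one1 l)^2 * NV J gt (sv3 u v w) l
        - NV J gt one1 l * (NV J gt (sv2 u v) l * NV J gt (sv1 w) l
          + NV J gt (sv2 u w) l * NV J gt (sv1 v) l
          + NV J gt (sv2 v w) l * NV J gt (sv1 u) l)
        + 2 * NV J gt (sv1 u) l * NV J gt (sv1 v) l * NV J gt (sv1 w) l ≤ 0 := by
      intro w
      have h0 := ghsU J (fun x => l * gt x) hJnonneg (fun x => mul_nonneg hl (hgt x)) u v w
      simpa only [← NV_eq_SS] using h0
    have hUsum : ∑ w, gt w * ((NV J gt one1 l)^2 * NV J gt (sv3 u v w) l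
        - NV J gt one1 l * (NV J gt (sv2 u v) l * NV J gt (sv1 w) l
          + NV J gt (sv2 u w) l * NV J gt (sv1 v) l
          + NV J gt (sv2 v w) l * NV J gt (sv1 u) l)
        + 2 * NV J gt (sv1 u) l * NV J gt (sv1 v) l * NV J gt (sv1 w) l) ≤ 0 := by
      apply Finset.sum_nonpos
      intro w _
      exact mul_nonpos_of_nonneg_of_nonpos (hgt w) (hU w)
    have hexpand : ∑ w, gt w * ((NV J gt one1 l)^2 * NV J gt (sv3 u v w) l
        - NV J gt one1 l * (NV J gt (sv2 u v) l * NV J gt (sv1 w) l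
          + NV J gt (sv2 u w) l * NV J gt (sv1 v) l
          + NV J gt (sv2 v w) l * NV J gt (sv1 u) l)
        + 2 * NV J gt (sv1 u) l * NV J gt (sv1 v) l * NV J gt (sv1 w) l)
        = (NV J gt one1 l)^2 * (∑ w, gt w * NV J gt (sv3 u v w) l)
          - NV J gt one1 l * NV J gt (sv2 u v) l * (∑ w, gt w * NV J gt (sv1 w) l)
          - NV J gt one1 l * NV J gt (sv1 v) l * (∑ w, gt w * NV J gt (sv2 u w) l)
          - NV J gt one1 l * NV J gt (sv1 u) l * (∑ w, gt w * NV J gt (sv2 v w) l)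
          + 2 * NV J gt (sv1 u) l * NV J gt (sv1 v) l * (∑ w, gt w * NV J gt (sv1 w) l) := by
      simp only [Finset.mul_sum]
      rw [← Finset.sum_sub_distrib, ← Finset.sum_sub_distrib, ← Finset.sum_sub_distrib,
        ← Finset.sum_add_distrib]
      apply Finset.sum_congr rfl
      intro w _
      ring
    set S3 := ∑ w, gt w * NV J gt (sv3 u v w) l with hS3
    set S1 := ∑ w, gt w * NV J gt (sv1 w) l with hS1
    set Suw := ∑ w, gt w * NV J gt (sv2 u w) l with hSuw
    set Svw := ∑ w, gt w * NV J gt (sv2 v w) l with hSvw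
    rw [hexpand] at hUsum
    have hg : ((S3 * NV J gt one1 l - NV J gt (sv2 u v) l * S1) / (NV J gt one1 l)^2
        - ((Suw * NV J gt one1 l - NV J gt (sv1 u) l * S1) / (NV J gt one1 l)^2
            * (NV J gt (sv1 v) l / NV J gt one1 l)
          + NV J gt (sv1 u) l / NV J gt one1 l
            * ((Svw * NV J gt one1 l - NV J gt (sv1 v) l * S1) / (NV J gt one1 l)^2)))
        = (NV J gt one1 l * ((NV J gt one1 l)^2 * S3
            - NV J gt one1 l * NV J gt (sv2 u v) l * S1
            - NV J gt one1 l * NV J gt (sv1 v) l * Suw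
            - NV J gt one1 l * NV J gt (sv1 u) l * Svw
            + 2 * NV J gt (sv1 u) l * NV J gt (sv1 v) l * S1)) / (NV J gt one1 l)^4 := by
      field_simp
      ring
    rw [hg]
    apply div_nonpos_of_nonpos_of_nonneg
    · apply mul_nonpos_of_nonneg_of_nonpos hZ.le
      linarith [hUsum]
    · positivity
  apply antitoneOn_of_deriv_nonpos (convex_Ici 0)
  · apply Continuous.continuousOn
    have : Differentiable ℝ (fun l : ℝ => NV J gt (sv2 u v) l / NV J gt one1 l
        - (NV J gt (sv1 u) l / NV J gt one1 l) * (NV J gt (sv1 v) l / NV J gt one1 l)) :=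
      fun l => (hder l).differentiableAt
    exact this.continuous
  · intro x hx
    exact (hder x).differentiableAt.differentiableWithinAt
  · intro x hx
    rw [(hder x).deriv]
    rw [interior_Ici] at hx
    exact hnp x (le_of_lt hx)
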